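/- Let F be C¹ strictly convex on a convex open set U ⊆ ℝ^d, P a probability measure with P(U)=1 satisfying ∫(|ξ| ∨ |F(ξ)|)^{r/2} dP < ∞ for some r > 0. Let (z_k)_{k≥1} be a sequence dense in U. Then G_{r,n}(z_1,…,z_n) := ∫ min_{1≤i≤n} φ_F(ξ, z_i)^{r/2} dP(ξ) decreases to 0 as n → ∞. In particular the optimal quantization errors e_{r,n}(P, φ_F) tend to 0 as n → ∞. -/

import Mathlib

open scoped InnerProductSpace

noncomputable def bregman {d : ℕ} (F : EuclideanSpace ℝ (Fin d) → ℝ)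
    (f : EuclideanSpace ℝ (Fin d) → EuclideanSpace ℝ (Fin d))
    (ξ x : EuclideanSpace ℝ (Fin d)) : ℝ :=
  F ξ - F x - ⟪f x, ξ - x⟫_ℝ

open MeasureTheory Filter

lemma fin_iInf_succ_aux {n : ℕ} (g : Fin (n + 1 + 1) → ℝ) :
    ⨅ i, g i = min (g 0) (⨅ i : Fin (n + 1), g i.succ) := by
  apply le_antisymm
  · exact le_min (ciInf_le (Set.finite_range g).bddBelow 0)
      (le_ciInf fun i => ciInf_le (Set.finite_range g).bddBelow i.succ)
  · refine le_ciInf fun j => ?_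
    induction j using Fin.cases with
    | zero => exact min_le_left _ _
    | succ i => exact (min_le_right _ _).trans (ciInf_le (Set.finite_range _).bddBelow i)

lemma aemeasurable_iInf_fin {α : Type*} [MeasurableSpace α] {μ : Measure α} :
    ∀ (n : ℕ) (g : Fin (n + 1) → α → ℝ), (∀ i, AEMeasurable (g i) μ) →
      AEMeasurable (fun ξ => ⨅ i, g i ξ) μ := by
  intro n
  induction n with
  | zero =>
    intro g hg
    have e : (fun ξ => ⨅ i : Fin 1, g i ξ) = g 0 := funext fun ξ => ciInf_unique
    rw [e]; exact hg 0
  | succ m ih =>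
    intro g hg
    have e : (fun ξ => ⨅ i : Fin (m + 1 + 1), g i ξ)
        = fun ξ => min (g 0 ξ) (⨅ i : Fin (m + 1), g i.succ ξ) :=
      funext fun ξ => fin_iInf_succ_aux fun i => g i ξ
    rw [e]
    exact (hg 0).inf (ih _ fun i => hg i.succ)

lemma bregman_nonneg {d : ℕ} {U : Set (EuclideanSpace ℝ (Fin d))}
    {F : EuclideanSpace ℝ (Fin d) → ℝ}
    {f : EuclideanSpace ℝ (Fin d) → EuclideanSpace ℝ (Fin d)}
    (hgrad : ∀ x ∈ U, HasGradientAt F (f x) x)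
    (hconv : ConvexOn ℝ U F) {x ξ : EuclideanSpace ℝ (Fin d)}
    (hx : x ∈ U) (hξ : ξ ∈ U) : 0 ≤ bregman F f ξ x := by
  set v := ξ - x with hvdef
  have hFd : HasFDerivAt F (InnerProductSpace.toDual ℝ _ (f x)) x :=
    (hgrad x hx).hasFDerivAt
  have hγ : HasDerivAt (fun t : ℝ => x + t • v) v 0 := by
    simpa using ((hasDerivAt_id (0 : ℝ)).smul_const v).const_add x
  have h0 : x + (0 : ℝ) • v = x := by simp
  have hFd' : HasFDerivAt F (InnerProductSpace.toDual ℝ _ (f x)) ((fun t : ℝ => x + t • v) 0) := by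
    simpa [h0] using hFd
  have hcomp : HasDerivAt (fun t : ℝ => F (x + t • v)) ⟪f x, v⟫_ℝ 0 := by
    simpa [Function.comp_def] using hFd'.comp_hasDerivAt 0 hγ
  have key : ∀ t ∈ Set.Ioc (0 : ℝ) 1, slope (fun t : ℝ => F (x + t • v)) 0 t ≤ F ξ - F x := by
    intro t ht
    have hmem : x + t • v = (1 - t) • x + t • ξ := by
      rw [hvdef, smul_sub, sub_smul, one_smul]
      abel
    have hcvx : F ((1 - t) • x + t • ξ) ≤ (1 - t) * F x + t * F ξ :=
      hconv.2 hx hξ (by linarith [ht.2]) ht.1.le (by ring)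
    have hnum : F (x + t • v) - F x ≤ t * (F ξ - F x) := by
      rw [hmem]; nlinarith [hcvx]
    have hslope : slope (fun t : ℝ => F (x + t • v)) 0 t = (F (x + t • v) - F x) / t := by
      rw [slope_def_field]
      simp [h0]
    rw [hslope, div_le_iff₀ ht.1]
    nlinarith [hnum]
  have hlim : Tendsto (slope (fun t : ℝ => F (x + t • v)) 0) (nhdsWithin 0 (Set.Ioi 0))
      (nhds ⟪f x, v⟫_ℝ) :=
    (hasDerivAt_iff_tendsto_slope.1 hcomp).mono_left
      (nhdsWithin_mono _ fun t ht => Set.mem_compl_singleton_iff.2 (ne_of_gt ht))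
  have hle : ⟪f x, v⟫_ℝ ≤ F ξ - F x :=
    le_of_tendsto hlim (Filter.eventually_of_mem (Ioc_mem_nhdsGT one_pos) key)
  unfold bregman
  rw [← hvdef]
  linarith

open MeasureTheory Filter in
theorem stmt_12 {d : ℕ} (U : Set (EuclideanSpace ℝ (Fin d)))
    (hUopen : IsOpen U) (hUconv : Convex ℝ U)
    (F : EuclideanSpace ℝ (Fin d) → ℝ)
    (f : EuclideanSpace ℝ (Fin d) → EuclideanSpace ℝ (Fin d))
    (hF : ContDiffOn ℝ 1 F U)
    (hgrad : ∀ x ∈ U, HasGradientAt F (f x) x)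
    (hconv : StrictConvexOn ℝ U F)
    (r : ℝ) (hr : 0 < r)
    (P : Measure (EuclideanSpace ℝ (Fin d))) [IsProbabilityMeasure P]
    (hPU : P U = 1)
    (hmom : Integrable (fun ξ => (max ‖ξ‖ |F ξ|) ^ (r / 2)) P)
    (z : ℕ → EuclideanSpace ℝ (Fin d))
    (hzU : ∀ k, z k ∈ U)
    (hdense : U ⊆ closure (Set.range z)) :
    Antitone (fun n : ℕ =>
        ∫ ξ, (⨅ i : Fin (n + 1), bregman F f ξ (z i) ^ (r / 2)) ∂P) ∧
    Tendsto (fun n : ℕ =>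
        ∫ ξ, (⨅ i : Fin (n + 1), bregman F f ξ (z i) ^ (r / 2)) ∂P)
      atTop (nhds 0) ∧
    Tendsto (fun n : ℕ =>
        sInf {y : ℝ | ∃ (Γ : Finset (EuclideanSpace ℝ (Fin d))) (hΓ : Γ.Nonempty),
          ↑Γ ⊆ U ∧ Γ.card ≤ n ∧
          y = ∫ ξ, (Γ.inf' hΓ fun a => bregman F f ξ a ^ (r / 2)) ∂P})
      atTop (nhds 0) := by
  classical
  set q : ℝ := r / 2 with hqdef
  have hq : 0 < q := by positivity
  -- a.e. membership in U
  have haeU : ∀ᵐ ξ ∂P, ξ ∈ U := by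
    rw [MeasureTheory.ae_iff]
    have hc : {ξ | ¬ ξ ∈ U} = Uᶜ := rfl
    rw [hc, measure_compl hUopen.measurableSet (measure_ne_top _ _), hPU, measure_univ]
    simp
  have hnonneg : ∀ᵐ ξ ∂P, ∀ k : ℕ, 0 ≤ bregman F f ξ (z k) :=
    haeU.mono fun ξ hξ k => bregman_nonneg hgrad hconv.convexOn (hzU k) hξ
  -- measurability of F
  have hFm : AEMeasurable F P := by
    have h1 : P.restrict U = P := Measure.restrict_eq_self_of_ae_mem haeU
    have h2 : AEMeasurable F (P.restrict U) :=
      (hF.continuousOn.aemeasurable hUopen.measurableSet)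
    rwa [h1] at h2
  have hbm : ∀ x, AEMeasurable (fun ξ => bregman F f ξ x) P := by
    intro x
    have hinner : Continuous fun ξ : EuclideanSpace ℝ (Fin d) => ⟪f x, ξ - x⟫_ℝ :=
      Continuous.inner continuous_const (continuous_id.sub continuous_const)
    exact (hFm.sub aemeasurable_const).sub hinner.aemeasurable
  have hvm : ∀ k : ℕ, AEMeasurable (fun ξ => bregman F f ξ (z k) ^ q) P := fun k =>
    (Real.continuous_rpow_const hq.le).measurable.comp_aemeasurable (hbm (z k))
  have ham : ∀ n : ℕ, AEMeasurable (fun ξ => ⨅ i : Fin (n + 1), bregman F f ξ (z i) ^ q) P :=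
    fun n => aemeasurable_iInf_fin n _ fun i => hvm i
  -- the dominating function
  set M : EuclideanSpace ℝ (Fin d) → ℝ := fun ξ => max ‖ξ‖ |F ξ| with hMdef
  have hM0 : ∀ ξ, 0 ≤ M ξ := fun ξ => le_trans (norm_nonneg ξ) (le_max_left _ _)
  set K : ℝ := |F (z 0)| + ‖f (z 0)‖ * ‖z 0‖ + (1 + ‖f (z 0)‖) with hKdef
  have hK0 : 0 ≤ K := by positivity
  have hbound : ∀ ξ, |bregman F f ξ (z 0)| ≤ K * max 1 (M ξ) := by
    intro ξ
    have hi : |⟪f (z 0), ξ - z 0⟫_ℝ| ≤ ‖f (z 0)‖ * (‖ξ‖ + ‖z 0‖) :=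
      (abs_real_inner_le_norm _ _).trans
        (mul_le_mul_of_nonneg_left (norm_sub_le _ _) (norm_nonneg _))
    have h1 : |bregman F f ξ (z 0)| ≤ |F ξ| + |F (z 0)| + ‖f (z 0)‖ * (‖ξ‖ + ‖z 0‖) := by
      have t1 := abs_sub (F ξ - F (z 0)) (⟪f (z 0), ξ - z 0⟫_ℝ)
      have t2 := abs_sub (F ξ) (F (z 0))
      unfold bregman
      calc |F ξ - F (z 0) - ⟪f (z 0), ξ - z 0⟫_ℝ|
          ≤ |F ξ - F (z 0)| + |⟪f (z 0), ξ - z 0⟫_ℝ| := t1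
        _ ≤ |F ξ| + |F (z 0)| + ‖f (z 0)‖ * (‖ξ‖ + ‖z 0‖) := by linarith [hi]
    set m : ℝ := max 1 (M ξ) with hmdef
    have hm1 : (1 : ℝ) ≤ m := le_max_left _ _
    have hmM : M ξ ≤ m := le_max_right _ _
    have e1 : |F (z 0)| ≤ |F (z 0)| * m := le_mul_of_one_le_right (abs_nonneg _) hm1
    have e2 : ‖f (z 0)‖ * ‖z 0‖ ≤ ‖f (z 0)‖ * ‖z 0‖ * m :=
      le_mul_of_one_le_right (by positivity) hm1
    have e3 : ‖f (z 0)‖ * ‖ξ‖ ≤ ‖f (z 0)‖ * m :=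
      mul_le_mul_of_nonneg_left ((le_max_left _ _).trans hmM) (norm_nonneg _)
    have e4 : |F ξ| ≤ m := (le_max_right _ _).trans hmM
    have expand : K * m = |F (z 0)| * m + ‖f (z 0)‖ * ‖z 0‖ * m + m + ‖f (z 0)‖ * m := by
      rw [hKdef]; ring
    rw [expand]
    nlinarith [h1, e1, e2, e3, e4]
  have hg_le : ∀ ξ, |bregman F f ξ (z 0)| ^ q ≤ K ^ q * (1 + M ξ ^ q) := by
    intro ξ
    have h2 : (K * max 1 (M ξ)) ^ q = K ^ q * (max 1 (M ξ)) ^ q :=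
      Real.mul_rpow hK0 (le_max_of_le_left zero_le_one)
    have h3 : (max 1 (M ξ)) ^ q ≤ 1 + M ξ ^ q := by
      rcases le_total (M ξ) 1 with h | h
      · rw [max_eq_left h, Real.one_rpow]
        linarith [Real.rpow_nonneg (hM0 ξ) q]
      · rw [max_eq_right h]; linarith
    calc |bregman F f ξ (z 0)| ^ q
        ≤ (K * max 1 (M ξ)) ^ q := Real.rpow_le_rpow (abs_nonneg _) (hbound ξ) hq.le
      _ = K ^ q * (max 1 (M ξ)) ^ q := h2
      _ ≤ K ^ q * (1 + M ξ ^ q) :=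
          mul_le_mul_of_nonneg_left h3 (Real.rpow_nonneg hK0 q)
  have hgm : AEMeasurable (fun ξ => |bregman F f ξ (z 0)| ^ q) P :=
    ((Real.continuous_rpow_const hq.le).comp continuous_abs).measurable.comp_aemeasurable (hbm (z 0))
  have hgint : Integrable (fun ξ => |bregman F f ξ (z 0)| ^ q) P := by
    refine Integrable.mono' (((integrable_const (1 : ℝ)).add hmom).const_mul (K ^ q))
      hgm.aestronglyMeasurable (Eventually.of_forall fun ξ => ?_)
    rw [Real.norm_eq_abs, abs_of_nonneg (Real.rpow_nonneg (abs_nonneg _) q)]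
    exact hg_le ξ
  have hdom : ∀ n : ℕ, ∀ᵐ ξ ∂P,
      ‖⨅ i : Fin (n + 1), bregman F f ξ (z i) ^ q‖ ≤ |bregman F f ξ (z 0)| ^ q := by
    intro n
    filter_upwards [hnonneg] with ξ hξ
    have hbb : BddBelow (Set.range fun i : Fin (n + 1) => bregman F f ξ (z i) ^ q) :=
      (Set.finite_range _).bddBelow
    have h0 : (0 : ℝ) ≤ ⨅ i : Fin (n + 1), bregman F f ξ (z i) ^ q :=
      le_ciInf fun i => Real.rpow_nonneg (hξ i) q
    have h1 : (⨅ i : Fin (n + 1), bregman F f ξ (z i) ^ q) ≤ bregman F f ξ (z 0) ^ q :=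
      ciInf_le hbb (0 : Fin (n + 1))
    rw [Real.norm_eq_abs, abs_of_nonneg h0]
    refine h1.trans ?_
    rw [abs_of_nonneg (hξ 0)]
  have hint : ∀ n : ℕ, Integrable (fun ξ => ⨅ i : Fin (n + 1), bregman F f ξ (z i) ^ q) P :=
    fun n => Integrable.mono' hgint (ham n).aestronglyMeasurable (hdom n)
  -- Part 1 : antitone
  have hanti : Antitone (fun n : ℕ =>
      ∫ ξ, (⨅ i : Fin (n + 1), bregman F f ξ (z i) ^ q) ∂P) := by
    apply antitone_nat_of_succ_le
    intro n
    refine integral_mono (hint (n + 1)) (hint n) fun ξ => ?_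
    exact le_ciInf fun i => ciInf_le (Set.finite_range _).bddBelow i.castSucc
  -- continuity of f on U
  have hfcont : ContinuousOn f U := by
    have hfd : ContinuousOn (fderiv ℝ F) U := hF.continuousOn_fderiv_of_isOpen hUopen le_rfl
    have hcont : ContinuousOn
        (fun x => (InnerProductSpace.toDual ℝ (EuclideanSpace ℝ (Fin d))).symm (fderiv ℝ F x)) U :=
      (InnerProductSpace.toDual ℝ (EuclideanSpace ℝ (Fin d))).symm.continuous.comp_continuousOn hfd
    refine hcont.congr fun x hx => ?_
    have h := (hgrad x hx).hasFDerivAt.fderiv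
    simp only [h]
    simp
  -- Part 2 : pointwise convergence
  have hptw : ∀ᵐ ξ ∂P,
      Tendsto (fun n : ℕ => ⨅ i : Fin (n + 1), bregman F f ξ (z i) ^ q) atTop (nhds 0) := by
    filter_upwards [haeU, hnonneg] with ξ hξU hξn
    refine tendsto_order.2 ⟨fun b hb => Eventually.of_forall fun n =>
      lt_of_lt_of_le hb (le_ciInf fun i => Real.rpow_nonneg (hξn i) q), fun ε hε => ?_⟩
    have hcontg : ContinuousAt (fun x => (F ξ - F x - ⟪f x, ξ - x⟫_ℝ) ^ q) ξ := by
      have hco : ContinuousOn (fun x => (F ξ - F x - ⟪f x, ξ - x⟫_ℝ) ^ q) U := by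
        refine (Real.continuous_rpow_const hq.le).comp_continuousOn ?_
        exact (continuousOn_const.sub hF.continuousOn).sub
          (ContinuousOn.inner hfcont ((continuous_const.sub continuous_id).continuousOn))
      exact hco.continuousAt (hUopen.mem_nhds hξU)
    have hval : (F ξ - F ξ - ⟪f ξ, ξ - ξ⟫_ℝ) ^ q = 0 := by
      simp [Real.zero_rpow hq.ne']
    have hnhds : (fun x => (F ξ - F x - ⟪f x, ξ - x⟫_ℝ) ^ q) ⁻¹' Set.Iio ε ∈ nhds ξ := by
      apply hcontg
      have hval' : ((fun x => (F ξ - F x - ⟪f x, ξ - x⟫_ℝ) ^ q) ξ) = 0 := hval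
      rw [hval']
      exact Iio_mem_nhds hε
    obtain ⟨y, hy1, hy2⟩ := mem_closure_iff_nhds.1 (hdense hξU) _ hnhds
    obtain ⟨k, rfl⟩ := hy2
    refine eventually_atTop.2 ⟨k, fun n hn => ?_⟩
    have hle : (⨅ i : Fin (n + 1), bregman F f ξ (z i) ^ q) ≤ bregman F f ξ (z k) ^ q :=
      ciInf_le (Set.finite_range _).bddBelow (⟨k, by omega⟩ : Fin (n + 1))
    exact lt_of_le_of_lt hle hy1
  have htend : Tendsto (fun n : ℕ =>
      ∫ ξ, (⨅ i : Fin (n + 1), bregman F f ξ (z i) ^ q) ∂P) atTop (nhds 0) := by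
    have h := tendsto_integral_of_dominated_convergence
      (fun ξ => |bregman F f ξ (z 0)| ^ q)
      (fun n => (ham n).aestronglyMeasurable) hgint hdom
      (by filter_upwards [hptw] with ξ h using h)
    simpa using h
  refine ⟨hanti, htend, ?_⟩
  -- Part 3
  set S : ℕ → Set ℝ := fun n =>
    {y : ℝ | ∃ (Γ : Finset (EuclideanSpace ℝ (Fin d))) (hΓ : Γ.Nonempty),
      ↑Γ ⊆ U ∧ Γ.card ≤ n ∧
      y = ∫ ξ, (Γ.inf' hΓ fun a => bregman F f ξ a ^ q) ∂P} with hSdef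
  have hLB : ∀ n, ∀ y ∈ S n, 0 ≤ y := by
    rintro n y ⟨Γ, hne, hsub, hcard, rfl⟩
    refine integral_nonneg_of_ae ?_
    filter_upwards [haeU] with ξ hξ
    refine Finset.le_inf' hne _ fun a ha => ?_
    exact Real.rpow_nonneg (bregman_nonneg hgrad hconv.convexOn (hsub ha) hξ) q
  have hbdd : ∀ n, BddBelow (S n) := fun n => ⟨0, fun y hy => hLB n y hy⟩
  have hmem : ∀ n : ℕ,
      (∫ ξ, (⨅ i : Fin (n + 1), bregman F f ξ (z i) ^ q) ∂P) ∈ S (n + 1) := by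
    intro n
    have hne : (Finset.image (fun i : Fin (n + 1) => z i) Finset.univ).Nonempty :=
      Finset.Nonempty.image Finset.univ_nonempty _
    refine ⟨Finset.image (fun i : Fin (n + 1) => z i) Finset.univ, hne, ?_, ?_, ?_⟩
    · intro a ha
      simp only [Finset.coe_image, Set.mem_image] at ha
      obtain ⟨i, _, rfl⟩ := ha
      exact hzU i
    · calc (Finset.image (fun i : Fin (n + 1) => z i) Finset.univ).card
          ≤ (Finset.univ : Finset (Fin (n + 1))).card := Finset.card_image_le
        _ = n + 1 := by simp
    · have e : ∀ ξ, ((Finset.image (fun i : Fin (n + 1) => z i) Finset.univ).inf' hne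
          fun a => bregman F f ξ a ^ q)
          = ⨅ i : Fin (n + 1), bregman F f ξ (z i) ^ q := by
        intro ξ
        rw [Finset.inf'_image]
        rw [Finset.inf'_univ_eq_ciInf]
        rfl
      exact integral_congr_ae (Eventually.of_forall fun ξ => (e ξ).symm)
  have hsle : ∀ n : ℕ, sInf (S (n + 1)) ≤
      ∫ ξ, (⨅ i : Fin (n + 1), bregman F f ξ (z i) ^ q) ∂P :=
    fun n => csInf_le (hbdd (n + 1)) (hmem n)
  have haux : Tendsto (fun n : ℕ =>
      ∫ ξ, (⨅ i : Fin (n - 1 + 1), bregman F f ξ (z i) ^ q) ∂P) atTop (nhds 0) :=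
    htend.comp (tendsto_sub_atTop_nat 1)
  refine tendsto_of_tendsto_of_tendsto_of_le_of_le' tendsto_const_nhds haux ?_ ?_
  · exact Eventually.of_forall fun n => Real.sInf_nonneg (hLB n)
  · refine eventually_atTop.2 ⟨1, fun n hn => ?_⟩
    have : n - 1 + 1 = n := by omega
    calc sInf (S n) = sInf (S (n - 1 + 1)) := by rw [this]
      _ ≤ _ := hsle (n - 1)
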